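/- The operator norm (with respect to the Euclidean norm on ℝᵐ) of the difference S_m − A_mᵀ A_m satisfies ‖S_m − A_mᵀ A_m‖ ≤ C_K²/(6m²). -/

import Mathlib

open Real MeasureTheory Matrix

/-- The unit interval `[0,1]`. -/
def I01 : Set ℝ := Set.Icc 0 1

/-- `κ : [0,1]² → ℝ` is twice continuously differentiable, with partial derivatives
`κ10 = ∂ₓκ`, `κ01 = ∂ᵧκ`, `κ20 = ∂ₓ²κ`, `κ11 = ∂ₓ∂ᵧκ`, `κ02 = ∂ᵧ²κ`, and
`CK` bounds the absolute values of `κ` and all its partial derivatives of order `≤ 2`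
on `[0,1]²` (in the paper, `CK` is the supremum of these quantities). -/
def IsC2KernelWith (κ κ10 κ01 κ20 κ11 κ02 : ℝ → ℝ → ℝ) (CK : ℝ) : Prop :=
  (∀ x ∈ I01, ∀ y ∈ I01, HasDerivWithinAt (fun x' => κ x' y) (κ10 x y) I01 x) ∧
  (∀ x ∈ I01, ∀ y ∈ I01, HasDerivWithinAt (fun y' => κ x y') (κ01 x y) I01 y) ∧
  (∀ x ∈ I01, ∀ y ∈ I01, HasDerivWithinAt (fun x' => κ10 x' y) (κ20 x y) I01 x) ∧
  (∀ x ∈ I01, ∀ y ∈ I01, HasDerivWithinAt (fun y' => κ10 x y') (κ11 x y) I01 y) ∧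
  (∀ x ∈ I01, ∀ y ∈ I01, HasDerivWithinAt (fun y' => κ01 x y') (κ02 x y) I01 y) ∧
  ContinuousOn (fun p : ℝ × ℝ => κ p.1 p.2) (I01 ×ˢ I01) ∧
  ContinuousOn (fun p : ℝ × ℝ => κ10 p.1 p.2) (I01 ×ˢ I01) ∧
  ContinuousOn (fun p : ℝ × ℝ => κ01 p.1 p.2) (I01 ×ˢ I01) ∧
  ContinuousOn (fun p : ℝ × ℝ => κ20 p.1 p.2) (I01 ×ˢ I01) ∧
  ContinuousOn (fun p : ℝ × ℝ => κ11 p.1 p.2) (I01 ×ˢ I01) ∧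
  ContinuousOn (fun p : ℝ × ℝ => κ02 p.1 p.2) (I01 ×ˢ I01) ∧
  (∀ x ∈ I01, ∀ y ∈ I01,
    |κ x y| ≤ CK ∧ |κ10 x y| ≤ CK ∧ |κ01 x y| ≤ CK ∧
    |κ20 x y| ≤ CK ∧ |κ11 x y| ≤ CK ∧ |κ02 x y| ≤ CK)

/-- The midpoint grid points `ξ_{l,m} = (2l−1)/(2m)`. -/
noncomputable def gridPt (m l : ℕ) : ℝ := (2 * (l : ℝ) - 1) / (2 * (m : ℝ))


lemma I01_def : I01 = Set.Icc (0:ℝ) 1 := rfl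

open intervalIntegral in
lemma taylor_pt (f f1 : ℝ → ℝ) (M : ℝ)
    (hf : ∀ x ∈ I01, HasDerivWithinAt f (f1 x) I01 x)
    (hlip : ∀ x ∈ I01, ∀ y ∈ I01, |f1 x - f1 y| ≤ M * |x - y|)
    (hcont1 : ContinuousOn f1 I01)
    {c x : ℝ} (hc : c ∈ I01) (hx : x ∈ I01) :
    |f x - f c - f1 c * (x - c)| ≤ M / 2 * (x - c) ^ 2 := by
  obtain ⟨hc0, hc1⟩ := hc
  obtain ⟨hx0, hx1⟩ := hx
  have hc : c ∈ I01 := ⟨hc0, hc1⟩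
  have hx : x ∈ I01 := ⟨hx0, hx1⟩
  set φ : ℝ → ℝ := fun t => f t - f c - f1 c * (t - c) with hφdef
  have hsub : Set.uIcc c x ⊆ I01 := by
    rw [I01_def, ← Set.uIcc_of_le (by norm_num : (0:ℝ) ≤ 1)]
    exact Set.uIcc_subset_uIcc (by rw [Set.uIcc_of_le]; exact hc; norm_num)
      (by rw [Set.uIcc_of_le]; exact hx; norm_num)
  have hφderiv : ∀ t ∈ I01, HasDerivWithinAt φ (f1 t - f1 c) I01 t := by
    intro t ht
    have h1 : HasDerivWithinAt (fun t => f1 c * (t - c)) (f1 c) I01 t := by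
      simpa using ((hasDerivWithinAt_id t I01).sub_const c).const_mul (f1 c)
    exact ((hf t ht).sub_const (f c)).sub h1
  have hcontφI : ContinuousOn φ I01 := fun t ht => (hφderiv t ht).continuousWithinAt
  have hcontφ : ContinuousOn φ (Set.uIcc c x) := hcontφI.mono hsub
  have hint : IntervalIntegrable (fun t => f1 t - f1 c) volume c x :=
    ((hcont1.sub continuousOn_const).mono hsub).intervalIntegrable
  have hIoo : Set.Ioo (min c x) (max c x) ⊆ Set.Ioo (0:ℝ) 1 :=
    Set.Ioo_subset_Ioo (le_min hc0 hx0) (max_le hc1 hx1)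
  have hftc : ∫ t in c..x, (f1 t - f1 c) = φ x - φ c := by
    refine integral_eq_sub_of_hasDeriv_right hcontφ (fun t ht => ?_) hint
    have ht2 := hIoo ht
    have ht' : t ∈ I01 := ⟨ht2.1.le, ht2.2.le⟩
    exact ((hφderiv t ht').hasDerivAt
      (by rw [I01_def]; exact Icc_mem_nhds ht2.1 ht2.2)).hasDerivWithinAt
  have hφc : φ c = 0 := by simp [hφdef]
  have hgoal : f x - f c - f1 c * (x - c) = ∫ t in c..x, (f1 t - f1 c) := by
    rw [hftc, hφc, sub_zero]
  rw [hgoal]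
  have key : ∀ u v : ℝ, (∫ t in u..v, (M * (t - u))) = M / 2 * (v - u) ^ 2 := by
    intro u v
    rw [intervalIntegral.integral_const_mul,
      intervalIntegral.integral_comp_sub_right (fun t => t) u, integral_id]
    ring
  rcases le_total c x with h | h
  · have hIcc : Set.Icc c x ⊆ I01 := Set.Icc_subset_Icc hc0 hx1
    have hint1 : IntervalIntegrable (fun t => |f1 t - f1 c|) volume c x :=
      (((hcont1.sub continuousOn_const).mono hsub).abs).intervalIntegrable
    have hint2 : IntervalIntegrable (fun t => M * (t - c)) volume c x :=
      (Continuous.intervalIntegrable (by continuity) _ _)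
    calc |∫ t in c..x, (f1 t - f1 c)| ≤ ∫ t in c..x, |f1 t - f1 c| :=
          abs_integral_le_integral_abs h
      _ ≤ ∫ t in c..x, M * (t - c) := by
          refine integral_mono_on h hint1 hint2 (fun t ht => ?_)
          have := hlip t (hIcc ht) c hc
          rwa [abs_of_nonneg (sub_nonneg.2 ht.1)] at this
      _ = M / 2 * (x - c) ^ 2 := key c x
  · have hIcc : Set.Icc x c ⊆ I01 := Set.Icc_subset_Icc hx0 hc1
    have hsub' : Set.uIcc x c ⊆ I01 := by rwa [Set.uIcc_comm]
    have hint1 : IntervalIntegrable (fun t => |f1 t - f1 c|) volume x c :=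
      (((hcont1.sub continuousOn_const).mono hsub').abs).intervalIntegrable
    have hint2 : IntervalIntegrable (fun t => M * (c - t)) volume x c :=
      (Continuous.intervalIntegrable (by continuity) _ _)
    rw [intervalIntegral.integral_symm x c, abs_neg]
    calc |∫ t in x..c, (f1 t - f1 c)| ≤ ∫ t in x..c, |f1 t - f1 c| :=
          abs_integral_le_integral_abs h
      _ ≤ ∫ t in x..c, M * (c - t) := by
          refine integral_mono_on h hint1 hint2 (fun t ht => ?_)
          have := hlip t (hIcc ht) c hc
          rwa [abs_sub_comm t c, abs_of_nonneg (sub_nonneg.2 ht.2)] at this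
      _ = M / 2 * (x - c) ^ 2 := by
          rw [intervalIntegral.integral_const_mul,
            intervalIntegral.integral_comp_sub_left (fun t => t) c, integral_id]
          ring

open intervalIntegral in
lemma midpoint_err (f f1 : ℝ → ℝ) (M : ℝ)
    (hf : ∀ x ∈ I01, HasDerivWithinAt f (f1 x) I01 x)
    (hlip : ∀ x ∈ I01, ∀ y ∈ I01, |f1 x - f1 y| ≤ M * |x - y|)
    (hcont1 : ContinuousOn f1 I01)
    {a b : ℝ} (hab : a ≤ b) (ha : 0 ≤ a) (hb : b ≤ 1) :
    |(∫ x in a..b, f x) - (b - a) * f ((a + b) / 2)| ≤ M * (b - a) ^ 3 / 24 := by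
  set c : ℝ := (a + b) / 2 with hcdef
  have hac : a ≤ c := by rw [hcdef]; linarith
  have hcb : c ≤ b := by rw [hcdef]; linarith
  have hc : c ∈ I01 := ⟨le_trans ha hac, le_trans hcb hb⟩
  have hIcc : Set.Icc a b ⊆ I01 := Set.Icc_subset_Icc ha hb
  have huIcc : Set.uIcc a b ⊆ I01 := by rwa [Set.uIcc_of_le hab]
  have hcontf : ContinuousOn f I01 := fun t ht => (hf t ht).continuousWithinAt
  have hfint : IntervalIntegrable f volume a b := (hcontf.mono huIcc).intervalIntegrable
  have hgint : IntervalIntegrable (fun x => f c + f1 c * (x - c)) volume a b :=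
    (Continuous.intervalIntegrable (by continuity) _ _)
  have h0 : (∫ x in a..b, (f x - (f c + f1 c * (x - c))))
      = (∫ x in a..b, f x) - (b - a) * f c := by
    rw [intervalIntegral.integral_sub hfint hgint]
    have : (∫ x in a..b, (f c + f1 c * (x - c)))
        = (b - a) * f c + f1 c * ((b - c) ^ 2 / 2 - (a - c) ^ 2 / 2) := by
      rw [intervalIntegral.integral_add (Continuous.intervalIntegrable (by continuity) _ _)
        (Continuous.intervalIntegrable (by continuity) _ _),
        intervalIntegral.integral_const, intervalIntegral.integral_const_mul,
        intervalIntegral.integral_comp_sub_right (fun t => t) c, integral_id]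
      simp only [smul_eq_mul]; ring
    rw [this]
    have hbc : b - c = (b - a) / 2 := by rw [hcdef]; ring
    have hac2 : a - c = -((b - a) / 2) := by rw [hcdef]; ring
    rw [hbc, hac2]; ring
  have habs : ∀ x ∈ Set.Icc a b, |f x - (f c + f1 c * (x - c))| ≤ M / 2 * (x - c) ^ 2 := by
    intro x hx
    have := taylor_pt f f1 M hf hlip hcont1 hc (hIcc hx)
    convert this using 2
    ring
  have hint1 : IntervalIntegrable (fun x => |f x - (f c + f1 c * (x - c))|) volume a b :=
    (((hcontf.mono huIcc).sub (Continuous.continuousOn (by continuity))).abs).intervalIntegrable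
  have hint2 : IntervalIntegrable (fun x => M / 2 * (x - c) ^ 2) volume a b :=
    (Continuous.intervalIntegrable (by continuity) _ _)
  calc |(∫ x in a..b, f x) - (b - a) * f c|
      = |∫ x in a..b, (f x - (f c + f1 c * (x - c)))| := by rw [h0]
    _ ≤ ∫ x in a..b, |f x - (f c + f1 c * (x - c))| := abs_integral_le_integral_abs hab
    _ ≤ ∫ x in a..b, M / 2 * (x - c) ^ 2 := integral_mono_on hab hint1 hint2 habs
    _ = M * (b - a) ^ 3 / 24 := by
        rw [intervalIntegral.integral_const_mul,
          intervalIntegral.integral_comp_sub_right (fun t => t ^ 2) c, integral_pow]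
        have hbc : b - c = (b - a) / 2 := by rw [hcdef]; ring
        have hac2 : a - c = -((b - a) / 2) := by rw [hcdef]; ring
        rw [hbc, hac2]; ring

open intervalIntegral in
lemma quad_err (f f1 : ℝ → ℝ) (M : ℝ)
    (hf : ∀ x ∈ I01, HasDerivWithinAt f (f1 x) I01 x)
    (hlip : ∀ x ∈ I01, ∀ y ∈ I01, |f1 x - f1 y| ≤ M * |x - y|)
    (hcont1 : ContinuousOn f1 I01)
    (m : ℕ) (hm : 1 ≤ m) :
    |(∫ x in (0:ℝ)..1, f x) - ∑ l ∈ Finset.range m, f (gridPt m (l + 1)) / m|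
      ≤ M / (24 * (m : ℝ) ^ 2) := by
  have hm' : (0:ℝ) < m := by exact_mod_cast Nat.pos_of_ne_zero (by omega)
  set g : ℕ → ℝ := fun l => l / m with hg
  have hcontf : ContinuousOn f I01 := fun t ht => (hf t ht).continuousWithinAt
  have hgmono : ∀ k : ℕ, g k ≤ g (k + 1) := by
    intro k
    show (k : ℝ) / m ≤ ((k + 1 : ℕ) : ℝ) / m
    gcongr
    push_cast; linarith
  have hgmem : ∀ k : ℕ, k ≤ m → g k ∈ I01 := by
    intro k hk
    refine ⟨by positivity, ?_⟩
    rw [hg]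
    rw [div_le_one hm']
    exact_mod_cast hk
  have hik : ∀ k, k < m → IntervalIntegrable f volume (g k) (g (k + 1)) := by
    intro k hk
    refine (hcontf.mono ?_).intervalIntegrable
    rw [Set.uIcc_of_le (hgmono k)]
    exact Set.Icc_subset_Icc (hgmem k hk.le).1 (hgmem (k + 1) hk).2
  have hsplit : (∑ k ∈ Finset.range m, ∫ x in g k..g (k + 1), f x) = ∫ x in (0:ℝ)..1, f x := by
    have := intervalIntegral.sum_integral_adjacent_intervals hik
    rw [this]
    norm_num [hg, div_self hm'.ne']
  have hterm : ∀ k ∈ Finset.range m,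
      |(∫ x in g k..g (k + 1), f x) - f (gridPt m (k + 1)) / m| ≤ M / (24 * (m:ℝ) ^ 3) := by
    intro k hk
    rw [Finset.mem_range] at hk
    have h1 := midpoint_err f f1 M hf hlip hcont1 (hgmono k) (hgmem k hk.le).1
      (hgmem (k + 1) hk).2
    have hba : g (k + 1) - g k = 1 / m := by rw [hg]; push_cast; field_simp; ring
    have hmid : (g k + g (k + 1)) / 2 = gridPt m (k + 1) := by
      rw [hg, gridPt]; push_cast; field_simp; ring
    rw [hba, hmid] at h1
    calc |(∫ x in g k..g (k + 1), f x) - f (gridPt m (k + 1)) / m|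
        = |(∫ x in g k..g (k + 1), f x) - 1 / m * f (gridPt m (k + 1))| := by
          rw [show f (gridPt m (k + 1)) / (m:ℝ) = 1 / m * f (gridPt m (k + 1)) from by ring]
      _ ≤ M * (1 / m) ^ 3 / 24 := h1
      _ = M / (24 * (m:ℝ) ^ 3) := by
          have hne : (m:ℝ) ≠ 0 := hm'.ne'
          field_simp
          try ring
          try tauto
  calc |(∫ x in (0:ℝ)..1, f x) - ∑ l ∈ Finset.range m, f (gridPt m (l + 1)) / m|
      = |∑ k ∈ Finset.range m, ((∫ x in g k..g (k + 1), f x) - f (gridPt m (k + 1)) / m)| := by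
        rw [Finset.sum_sub_distrib, hsplit]
    _ ≤ ∑ k ∈ Finset.range m, |(∫ x in g k..g (k + 1), f x) - f (gridPt m (k + 1)) / m| :=
        Finset.abs_sum_le_sum_abs _ _
    _ ≤ ∑ _k ∈ Finset.range m, M / (24 * (m:ℝ) ^ 3) := Finset.sum_le_sum hterm
    _ = M / (24 * (m:ℝ) ^ 2) := by
        rw [Finset.sum_const, Finset.card_range, nsmul_eq_mul]
        have hne : (m:ℝ) ≠ 0 := hm'.ne'
        field_simp
        try ring
        try tauto

/-- The operator norm (w.r.t. the Euclidean norm on `ℝᵐ`) of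
`S_m − A_mᵀA_m` is at most `C_K²/(6m²)`, where `(A_m)_{ij} = κ(ξ_{i,m},ξ_{j,m})/m` and
`(S_m)_{ij} = (1/m)∫₀¹ κ(x,ξ_{i,m})κ(x,ξ_{j,m}) dx`; equivalently, for every `w ∈ ℝᵐ`,
`‖(S_m − A_mᵀA_m)w‖ ≤ (C_K²/(6m²))·‖w‖`. -/
theorem stmt_8 (κ κ10 κ01 κ20 κ11 κ02 : ℝ → ℝ → ℝ) (CK : ℝ)
    (hker : IsC2KernelWith κ κ10 κ01 κ20 κ11 κ02 CK)
    (m : ℕ) (hm : 1 ≤ m)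
    (A S : Matrix (Fin m) (Fin m) ℝ)
    (hA : ∀ i j : Fin m, A i j = κ (gridPt m ((i : ℕ) + 1)) (gridPt m ((j : ℕ) + 1)) / m)
    (hS : ∀ i j : Fin m, S i j =
      (1 / (m : ℝ)) * ∫ x in (0:ℝ)..1, κ x (gridPt m ((i : ℕ) + 1)) * κ x (gridPt m ((j : ℕ) + 1))) :
    ∀ w : Fin m → ℝ,
      Real.sqrt (∑ i, ((S - Aᵀ * A).mulVec w i) ^ 2)
        ≤ CK ^ 2 / (6 * (m : ℝ) ^ 2) * Real.sqrt (∑ i, w i ^ 2) := by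
  intro w
  obtain ⟨hd10, hd01, hd20, hd11, hd02, hcκ, hc10, hc01, hc20, hc11, hc02, hbd⟩ := hker
  have h0I : (0:ℝ) ∈ I01 := ⟨le_rfl, zero_le_one⟩
  have hCK0 : 0 ≤ CK := le_trans (abs_nonneg _) (hbd 0 h0I 0 h0I).1
  have hm' : (0:ℝ) < m := by exact_mod_cast Nat.pos_of_ne_zero (by omega)
  have hmne : (m:ℝ) ≠ 0 := hm'.ne'
  -- grid points are in I01
  have hgrid : ∀ i : Fin m, gridPt m ((i : ℕ) + 1) ∈ I01 := by
    intro i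
    have hi : (i : ℕ) + 1 ≤ m := i.2
    have hi' : ((i:ℕ):ℝ) + 1 ≤ (m:ℝ) := by exact_mod_cast hi
    constructor
    · unfold gridPt
      apply div_nonneg _ (by positivity)
      push_cast
      linarith
    · unfold gridPt
      rw [div_le_one (by positivity)]
      push_cast
      linarith
  have hmul : ∀ a b : ℝ, |a| ≤ CK → |b| ≤ CK → |a * b| ≤ CK * CK := fun a b ha hb => by
    rw [abs_mul]; exact mul_le_mul ha hb (abs_nonneg _) hCK0
  -- the entrywise bound
  have hE : ∀ i j : Fin m, |(S - Aᵀ * A) i j| ≤ CK ^ 2 / (6 * (m:ℝ) ^ 3) := by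
    intro i j
    set yi := gridPt m ((i : ℕ) + 1) with hyi
    set yj := gridPt m ((j : ℕ) + 1) with hyj
    have hyiI : yi ∈ I01 := hgrid i
    have hyjI : yj ∈ I01 := hgrid j
    set f : ℝ → ℝ := fun x => κ x yi * κ x yj with hfdef
    set f1 : ℝ → ℝ := fun x => κ10 x yi * κ x yj + κ x yi * κ10 x yj with hf1def
    set f2 : ℝ → ℝ := fun x =>
      (κ20 x yi * κ x yj + κ10 x yi * κ10 x yj) +
      (κ10 x yi * κ10 x yj + κ x yi * κ20 x yj) with hf2def
    have hf : ∀ x ∈ I01, HasDerivWithinAt f (f1 x) I01 x := fun x hx =>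
      (hd10 x hx yi hyiI).mul (hd10 x hx yj hyjI)
    have hf1 : ∀ x ∈ I01, HasDerivWithinAt f1 (f2 x) I01 x := fun x hx =>
      ((hd20 x hx yi hyiI).mul (hd10 x hx yj hyjI)).add
        ((hd10 x hx yi hyiI).mul (hd20 x hx yj hyjI))
    have hf2bd : ∀ x ∈ I01, ‖f2 x‖ ≤ 4 * CK ^ 2 := by
      intro x hx
      obtain ⟨bκi, b10i, _, b20i, _, _⟩ := hbd x hx yi hyiI
      obtain ⟨bκj, b10j, _, b20j, _, _⟩ := hbd x hx yj hyjI
      have h1 := hmul _ _ b20i bκj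
      have h2 := hmul _ _ b10i b10j
      have h3 := hmul _ _ bκi b20j
      rw [Real.norm_eq_abs, hf2def]
      calc |κ20 x yi * κ x yj + κ10 x yi * κ10 x yj +
            (κ10 x yi * κ10 x yj + κ x yi * κ20 x yj)|
          ≤ |κ20 x yi * κ x yj + κ10 x yi * κ10 x yj| +
            |κ10 x yi * κ10 x yj + κ x yi * κ20 x yj| := abs_add_le _ _
        _ ≤ (|κ20 x yi * κ x yj| + |κ10 x yi * κ10 x yj|) +
            (|κ10 x yi * κ10 x yj| + |κ x yi * κ20 x yj|) :=
            add_le_add (abs_add_le _ _) (abs_add_le _ _)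
        _ ≤ (CK * CK + CK * CK) + (CK * CK + CK * CK) := by
            exact add_le_add (add_le_add h1 h2) (add_le_add h2 h3)
        _ = 4 * CK ^ 2 := by ring
    have hlip : ∀ x ∈ I01, ∀ y ∈ I01, |f1 x - f1 y| ≤ 4 * CK ^ 2 * |x - y| := by
      intro x hx y hy
      have := (convex_Icc (0:ℝ) 1).norm_image_sub_le_of_norm_hasDerivWithin_le
        (f' := f2) hf1 hf2bd hy hx
      simpa [Real.norm_eq_abs] using this
    have hcont1 : ContinuousOn f1 I01 := fun x hx => (hf1 x hx).continuousWithinAt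
    have hq := quad_err f f1 (4 * CK ^ 2) hf hlip hcont1 m hm
    -- identify the matrix entry
    have hEij : (S - Aᵀ * A) i j =
        (1 / (m:ℝ)) * ((∫ x in (0:ℝ)..1, f x) -
          ∑ l ∈ Finset.range m, f (gridPt m (l + 1)) / m) := by
      have hsum : (Aᵀ * A) i j =
          (1 / (m:ℝ)) * ∑ l ∈ Finset.range m, f (gridPt m (l + 1)) / m := by
        rw [Matrix.mul_apply]
        rw [Finset.mul_sum, ← Fin.sum_univ_eq_sum_range
          (fun l => (1 / (m:ℝ)) * (f (gridPt m (l + 1)) / m)) m]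
        refine Finset.sum_congr rfl fun l _ => ?_
        rw [Matrix.transpose_apply, hA l i, hA l j, hfdef]
        field_simp
        try ring
      rw [Matrix.sub_apply, hsum, hS i j, hfdef, mul_sub]
    rw [hEij, abs_mul, abs_of_nonneg (by positivity : (0:ℝ) ≤ 1 / (m:ℝ))]
    calc (1 / (m:ℝ)) * |(∫ x in (0:ℝ)..1, f x) -
          ∑ l ∈ Finset.range m, f (gridPt m (l + 1)) / m|
        ≤ (1 / (m:ℝ)) * (4 * CK ^ 2 / (24 * (m:ℝ) ^ 2)) := by
          exact mul_le_mul_of_nonneg_left hq (by positivity)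
      _ = CK ^ 2 / (6 * (m:ℝ) ^ 3) := by
          field_simp
          try ring
  -- operator norm bound from entrywise bound
  set E := S - Aᵀ * A with hEdef
  set c : ℝ := CK ^ 2 / (6 * (m:ℝ) ^ 3) with hcdef
  have hc0 : 0 ≤ c := by positivity
  have hkey : ∀ i, (E.mulVec w i) ^ 2 ≤ c ^ 2 * ((m:ℝ) * ∑ j, w j ^ 2) := by
    intro i
    have h1 : |E.mulVec w i| ≤ c * ∑ j, |w j| := by
      rw [Matrix.mulVec, dotProduct]
      calc |∑ j, E i j * w j| ≤ ∑ j, |E i j * w j| := Finset.abs_sum_le_sum_abs _ _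
        _ ≤ ∑ j, c * |w j| := Finset.sum_le_sum fun j _ => by
            rw [abs_mul]
            exact mul_le_mul_of_nonneg_right (hE i j) (abs_nonneg _)
        _ = c * ∑ j, |w j| := by rw [Finset.mul_sum]
    have h2 : (∑ j, |w j|) ^ 2 ≤ (m:ℝ) * ∑ j, w j ^ 2 := by
      have := Finset.sum_mul_sq_le_sq_mul_sq Finset.univ (fun _ => (1:ℝ)) fun j => |w j|
      simpa [sq_abs] using this
    calc (E.mulVec w i) ^ 2 = |E.mulVec w i| ^ 2 := (sq_abs _).symm
      _ ≤ (c * ∑ j, |w j|) ^ 2 := by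
          apply pow_le_pow_left₀ (abs_nonneg _) h1
      _ = c ^ 2 * (∑ j, |w j|) ^ 2 := by ring
      _ ≤ c ^ 2 * ((m:ℝ) * ∑ j, w j ^ 2) := mul_le_mul_of_nonneg_left h2 (sq_nonneg c)
  have hsum2 : ∑ i, (E.mulVec w i) ^ 2 ≤ (c * m) ^ 2 * ∑ j, w j ^ 2 := by
    calc ∑ i, (E.mulVec w i) ^ 2 ≤ ∑ _i : Fin m, c ^ 2 * ((m:ℝ) * ∑ j, w j ^ 2) :=
          Finset.sum_le_sum fun i _ => hkey i
      _ = (c * m) ^ 2 * ∑ j, w j ^ 2 := by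
          rw [Finset.sum_const, Finset.card_univ, Fintype.card_fin, nsmul_eq_mul]
          ring
  have hcm : c * m = CK ^ 2 / (6 * (m:ℝ) ^ 2) := by
    rw [hcdef]
    field_simp
    try ring
  calc Real.sqrt (∑ i, (E.mulVec w i) ^ 2)
      ≤ Real.sqrt ((c * m) ^ 2 * ∑ j, w j ^ 2) := Real.sqrt_le_sqrt hsum2
    _ = (c * m) * Real.sqrt (∑ j, w j ^ 2) := by
        rw [Real.sqrt_mul (by positivity), Real.sqrt_sq (by positivity)]
    _ = CK ^ 2 / (6 * (m:ℝ) ^ 2) * Real.sqrt (∑ i, w i ^ 2) := by rw [hcm]
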